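/- (Complex-scalar plane-wave form of Theorem 3.5 with s = 0, where i plays the role of the commuting bivector ι(t)ι(s).) Let m ≥ 2, let t, s ∈ ℝ^m be orthonormal vectors (|t| = |s| = 1, ⟨t,s⟩ = 0), and let k ∈ ℕ. Then for all z ∈ ℂ^m: (2π)^{-m/2} ∫_{ℝ^m} exp(−z·z/2 + x·z − x·x/4) · (⟨x,t⟩ − i⟨x,s⟩)^k e^{−|x|²/4} dx = (⟨z,t⟩ − i⟨z,s⟩)^k, where ⟨x,t⟩ = Σ_j x_j t_j and ⟨z,t⟩ = Σ_j z_j t_j. -/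

import Mathlib

open MeasureTheory Real Complex Finset


-- bound lemma
lemma sb_exists_bound (R : ℝ) (n : ℕ) :
    ∃ C : ℝ, ∀ u : ℝ, 0 ≤ u → u ^ n * Real.exp (R * u - u ^ 2 / 4) ≤ C := by
  set U : ℝ := 4 * (|R| + n + 1) with hU
  have hU0 : 0 ≤ U := by positivity
  have hcont : ContinuousOn (fun u : ℝ => u ^ n * Real.exp (R * u - u ^ 2 / 4)) (Set.Icc 0 U) :=
    (continuous_pow n).continuousOn.mul (Real.continuous_exp.comp (by continuity)).continuousOn
  obtain ⟨u₀, -, hu₀⟩ := isCompact_Icc.exists_isMaxOn ⟨0, Set.left_mem_Icc.2 hU0⟩ hcont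
  refine ⟨max (u₀ ^ n * Real.exp (R * u₀ - u₀ ^ 2 / 4)) 1, fun u hu => ?_⟩
  rcases le_or_gt u U with h | h
  · exact le_max_of_le_left (hu₀ ⟨hu, h⟩)
  · refine le_max_of_le_right ?_
    have hu1 : (1:ℝ) ≤ u := by nlinarith [abs_nonneg R, Nat.cast_nonneg (α := ℝ) n]
    have key : R * u - u ^ 2 / 4 ≤ -((n:ℝ) + 1) * u := by
      have h1 : u * (|R| + n + 1) ≤ u ^ 2 / 4 := by nlinarith [abs_nonneg R, Nat.cast_nonneg (α := ℝ) n]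
      have h2 : R * u ≤ |R| * u := by
        have := le_abs_self R
        nlinarith
      nlinarith
    have hue : u * Real.exp (-u) ≤ 1 := by
      rw [Real.exp_neg]
      rw [mul_inv_le_iff₀ (Real.exp_pos u), one_mul]
      linarith [Real.add_one_le_exp u]
    calc u ^ n * Real.exp (R * u - u ^ 2 / 4)
        ≤ u ^ n * Real.exp (-((n:ℝ) + 1) * u) :=
          mul_le_mul_of_nonneg_left (Real.exp_le_exp.2 key) (by positivity)
      _ = (u * Real.exp (-u)) ^ n * Real.exp (-u) := by
          rw [mul_pow, ← Real.exp_nat_mul]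
          rw [mul_assoc, ← Real.exp_add]
          congr 1
          push_cast
          ring
      _ ≤ 1 ^ n * 1 := by
          apply mul_le_mul
          · exact pow_le_pow_left₀ (by positivity) hue n
          · exact Real.exp_le_one_iff.2 (by linarith)
          · positivity
          · norm_num
      _ = 1 := by norm_num


noncomputable def sbN {m : ℕ} (x : Fin m → ℝ) : ℝ := Real.sqrt (∑ j, x j ^ 2)

lemma sbN_nonneg {m : ℕ} (x : Fin m → ℝ) : 0 ≤ sbN x := Real.sqrt_nonneg _

lemma sbN_sq {m : ℕ} (x : Fin m → ℝ) : sbN x ^ 2 = ∑ j, x j ^ 2 :=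
  Real.sq_sqrt (Finset.sum_nonneg fun j _ => sq_nonneg _)

lemma abs_le_sbN {m : ℕ} (x : Fin m → ℝ) (j : Fin m) : |x j| ≤ sbN x := by
  rw [← Real.sqrt_sq_eq_abs]
  exact Real.sqrt_le_sqrt (Finset.single_le_sum (fun i _ => sq_nonneg (x i)) (Finset.mem_univ j))

-- norm of a complex pairing
lemma sb_pair_norm {m : ℕ} (x : Fin m → ℝ) (c : Fin m → ℂ) :
    ‖∑ j, (x j : ℂ) * c j‖ ≤ sbN x * ∑ j, ‖c j‖ := by
  calc ‖∑ j, (x j : ℂ) * c j‖ ≤ ∑ j, ‖(x j : ℂ) * c j‖ := norm_sum_le _ _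
    _ ≤ ∑ j, sbN x * ‖c j‖ := by
        refine Finset.sum_le_sum fun j _ => ?_
        rw [norm_mul, Complex.norm_real, Real.norm_eq_abs]
        exact mul_le_mul_of_nonneg_right (abs_le_sbN x j) (norm_nonneg _)
    _ = sbN x * ∑ j, ‖c j‖ := (Finset.mul_sum _ _ _).symm

lemma sb_integrable_gauss (m : ℕ) :
    Integrable (fun x : Fin m → ℝ => Real.exp (-(∑ j, x j ^ 2) / 4)) := by
  have h := (GaussianFourier.integrable_cexp_neg_mul_sum_add (b := (1/4 : ℂ)) (by norm_num)
      (fun _ : Fin m => (0:ℂ))).norm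
  refine h.congr (Filter.Eventually.of_forall fun x => ?_)
  simp only [Complex.norm_exp, zero_mul, Finset.sum_const_zero, add_zero]
  congr 1
  have : -(1/4 : ℂ) * ∑ j, (x j : ℂ) ^ 2 = ((-(∑ j, x j ^ 2) / 4 : ℝ) : ℂ) := by
    push_cast
    ring
  rw [this, Complex.ofReal_re]

-- the dominating bound is integrable
lemma sb_integrable_bound (m : ℕ) (R : ℝ) (n : ℕ) :
    ∃ (g : (Fin m → ℝ) → ℝ), Integrable g ∧
      ∀ x : Fin m → ℝ, sbN x ^ n * Real.exp (R * sbN x - sbN x ^ 2 / 2) ≤ g x := by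
  obtain ⟨C, hC⟩ := sb_exists_bound R n
  refine ⟨fun x => C * Real.exp (-(∑ j, x j ^ 2) / 4), (sb_integrable_gauss m).const_mul C, fun x => ?_⟩
  have h1 : R * sbN x - sbN x ^ 2 / 2 = (R * sbN x - sbN x ^ 2 / 4) + (-(∑ j, x j ^2) / 4) := by
    rw [← sbN_sq x]; ring
  rw [h1, Real.exp_add, ← mul_assoc]
  exact mul_le_mul_of_nonneg_right (hC _ (sbN_nonneg x)) (Real.exp_pos _).le
lemma sb_cont_pair {m : ℕ} (c : Fin m → ℂ) :
    Continuous fun x : Fin m → ℝ => ∑ j, (x j : ℂ) * c j :=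
  continuous_finset_sum _ fun j _ =>
    (Complex.continuous_ofReal.comp (continuous_apply j)).mul continuous_const

lemma sb_cont_sq {m : ℕ} :
    Continuous fun x : Fin m → ℝ => ∑ j, (x j : ℂ) ^ 2 :=
  continuous_finset_sum _ fun j _ =>
    (Complex.continuous_ofReal.comp (continuous_apply j)).pow 2

lemma sb_cont {m : ℕ} (c v : Fin m → ℂ) (n : ℕ) (lam : ℝ) :
    Continuous (fun x : Fin m → ℝ =>
      Complex.exp ((∑ j, (x j : ℂ) * c j) + (lam : ℂ) * (∑ j, (x j : ℂ) * v j)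
          - (∑ j, (x j : ℂ) ^ 2) / 2) * (∑ j, (x j : ℂ) * v j) ^ n) :=
  (Complex.continuous_exp.comp
    (((sb_cont_pair c).add (continuous_const.mul (sb_cont_pair v))).sub
      (sb_cont_sq.div_const 2))).mul ((sb_cont_pair v).pow n)

lemma sb_norm_le {m : ℕ} (c v : Fin m → ℂ) (n : ℕ) (lam : ℝ) (hlam : |lam| ≤ 1)
    (x : Fin m → ℝ) :
    ‖Complex.exp ((∑ j, (x j : ℂ) * c j) + (lam : ℂ) * (∑ j, (x j : ℂ) * v j)
          - (∑ j, (x j : ℂ) ^ 2) / 2) * (∑ j, (x j : ℂ) * v j) ^ n‖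
      ≤ (∑ j, ‖v j‖) ^ n *
        (sbN x ^ n * Real.exp (((∑ j, ‖c j‖) + ∑ j, ‖v j‖) * sbN x - sbN x ^ 2 / 2)) := by
  set A : ℂ := ∑ j, (x j : ℂ) * c j
  set B : ℂ := ∑ j, (x j : ℂ) * v j
  have hS : (∑ j, (x j : ℂ) ^ 2) = ((∑ j, x j ^ 2 : ℝ) : ℂ) := by push_cast; rfl
  have hre : (A + (lam : ℂ) * B - (∑ j, (x j : ℂ) ^ 2) / 2).re
      ≤ ((∑ j, ‖c j‖) + ∑ j, ‖v j‖) * sbN x - sbN x ^ 2 / 2 := by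
    rw [hS, show (((∑ j, x j ^ 2 : ℝ) : ℂ)) / 2 = (((∑ j, x j ^ 2) / 2 : ℝ) : ℂ) by push_cast; ring]
    rw [Complex.sub_re, Complex.add_re, Complex.ofReal_re]
    have h1 : A.re ≤ sbN x * ∑ j, ‖c j‖ :=
      (Complex.re_le_norm A).trans (sb_pair_norm x c)
    have h2 : ((lam : ℂ) * B).re ≤ sbN x * ∑ j, ‖v j‖ := by
      rw [Complex.re_ofReal_mul]
      calc lam * B.re ≤ |lam * B.re| := le_abs_self _
        _ = |lam| * |B.re| := abs_mul _ _
        _ ≤ 1 * ‖B‖ := by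
            apply mul_le_mul hlam _ (abs_nonneg _) zero_le_one
            exact (Complex.abs_re_le_norm B)
        _ = ‖B‖ := one_mul _
        _ ≤ sbN x * ∑ j, ‖v j‖ := sb_pair_norm x v
    have h3 : (∑ j, x j ^ 2) / 2 = sbN x ^ 2 / 2 := by rw [sbN_sq]
    rw [h3]
    nlinarith [sbN_nonneg x]
  have hB : ‖B‖ ^ n ≤ (sbN x * ∑ j, ‖v j‖) ^ n :=
    pow_le_pow_left₀ (norm_nonneg _) (sb_pair_norm x v) n
  rw [norm_mul, norm_pow, Complex.norm_exp]
  calc Real.exp _ * ‖B‖ ^ n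
      ≤ Real.exp (((∑ j, ‖c j‖) + ∑ j, ‖v j‖) * sbN x - sbN x ^ 2 / 2)
          * (sbN x * ∑ j, ‖v j‖) ^ n :=
        mul_le_mul (Real.exp_le_exp.2 hre) hB (by positivity) (Real.exp_pos _).le
    _ = (∑ j, ‖v j‖) ^ n *
        (sbN x ^ n * Real.exp (((∑ j, ‖c j‖) + ∑ j, ‖v j‖) * sbN x - sbN x ^ 2 / 2)) := by
        ring

lemma sb_integrable {m : ℕ} (c v : Fin m → ℂ) (n : ℕ) (lam : ℝ) (hlam : |lam| ≤ 1) :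
    Integrable (fun x : Fin m → ℝ =>
      Complex.exp ((∑ j, (x j : ℂ) * c j) + (lam : ℂ) * (∑ j, (x j : ℂ) * v j)
          - (∑ j, (x j : ℂ) ^ 2) / 2) * (∑ j, (x j : ℂ) * v j) ^ n) := by
  obtain ⟨g, hg_int, hg⟩ := sb_integrable_bound m ((∑ j, ‖c j‖) + ∑ j, ‖v j‖) n
  refine Integrable.mono' (hg_int.const_mul ((∑ j, ‖v j‖) ^ n))
    (sb_cont c v n lam).aestronglyMeasurable (Filter.Eventually.of_forall fun x => ?_)
  exact (sb_norm_le c v n lam hlam x).trans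
    (mul_le_mul_of_nonneg_left (hg x) (by positivity))

lemma sb_base (m : ℕ) (c : Fin m → ℂ) :
    ∫ x : Fin m → ℝ, Complex.exp ((∑ j, (x j : ℂ) * c j) - (∑ j, (x j : ℂ) ^ 2) / 2)
    = ((Real.sqrt (2 * Real.pi) : ℂ)) ^ m * Complex.exp ((∑ j, c j ^ 2) / 2) := by
  have h : ∀ x : Fin m → ℝ,
      Complex.exp ((∑ j, (x j : ℂ) * c j) - (∑ j, (x j : ℂ) ^ 2) / 2)
      = ∏ j, Complex.exp ((-(1/2) : ℂ) * (x j : ℂ) ^ 2 + c j * (x j : ℂ) + 0) := by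
    intro x
    rw [← Complex.exp_sum]
    congr 1
    simp only [add_zero]
    rw [Finset.sum_add_distrib, ← Finset.mul_sum]
    rw [Finset.sum_congr rfl fun j _ => mul_comm (c j) ((x j : ℂ))]
    ring
  simp_rw [h]
  rw [MeasureTheory.integral_fintype_prod_volume_eq_prod
    (f := fun j (u : ℝ) => Complex.exp ((-(1/2) : ℂ) * (u : ℂ) ^ 2 + c j * (u : ℂ) + 0))]
  have hb : ((-(1/2) : ℂ)).re < 0 := by norm_num
  have h1 : ∀ j, (∫ u : ℝ, Complex.exp ((-(1/2) : ℂ) * (u : ℂ) ^ 2 + c j * (u : ℂ) + 0))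
      = ((Real.sqrt (2 * Real.pi) : ℂ)) * Complex.exp (c j ^ 2 / 2) := by
    intro j
    rw [integral_cexp_quadratic hb (c j) 0]
    congr 1
    · rw [show ((Real.pi : ℂ) / -(-(1/2))) = ((2 * Real.pi : ℝ) : ℂ) by push_cast; ring]
      rw [show ((1/2 : ℂ)) = ((1/(2:ℝ) : ℝ) : ℂ) by norm_num]
      rw [← Complex.ofReal_cpow (by positivity), ← Real.sqrt_eq_rpow]
    · congr 1
      ring
  rw [Finset.prod_congr rfl fun j _ => h1 j]
  rw [Finset.prod_mul_distrib, Finset.prod_const, Finset.card_univ, Fintype.card_fin,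
    ← Complex.exp_sum]
  congr 1
  rw [← Finset.sum_div]
lemma sb_main (m : ℕ) (v : Fin m → ℂ) (hv : ∑ j, v j ^ 2 = 0) (k : ℕ) :
    ∀ c : Fin m → ℂ,
    ∫ x : Fin m → ℝ, Complex.exp ((∑ j, (x j : ℂ) * c j) - (∑ j, (x j : ℂ) ^ 2) / 2)
        * (∑ j, (x j : ℂ) * v j) ^ k
    = ((Real.sqrt (2 * Real.pi) : ℂ)) ^ m * Complex.exp ((∑ j, c j ^ 2) / 2)
        * (∑ j, c j * v j) ^ k := by
  induction k with
  | zero =>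
    intro c
    simp only [pow_zero, mul_one]
    exact sb_base m c
  | succ k ih =>
    intro c
    set K : ℂ := ((Real.sqrt (2 * Real.pi) : ℂ)) ^ m with hK
    set W : ℂ := ∑ j, c j * v j with hW
    set C2 : ℂ := ∑ j, c j ^ 2 with hC2
    set F : ℝ → (Fin m → ℝ) → ℂ := fun lam x =>
      Complex.exp ((∑ j, (x j : ℂ) * c j) + (lam : ℂ) * (∑ j, (x j : ℂ) * v j)
          - (∑ j, (x j : ℂ) ^ 2) / 2) * (∑ j, (x j : ℂ) * v j) ^ k with hF
    set F' : ℝ → (Fin m → ℝ) → ℂ := fun lam x =>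
      Complex.exp ((∑ j, (x j : ℂ) * c j) + (lam : ℂ) * (∑ j, (x j : ℂ) * v j)
          - (∑ j, (x j : ℂ) ^ 2) / 2) * (∑ j, (x j : ℂ) * v j) ^ (k + 1) with hF'
    obtain ⟨g, hg_int, hg⟩ := sb_integrable_bound m ((∑ j, ‖c j‖) + ∑ j, ‖v j‖) (k + 1)
    -- derivative of the integral via dominated convergence
    have hdom := hasDerivAt_integral_of_dominated_loc_of_deriv_le (μ := volume)
      (F := F) (F' := F') (x₀ := (0 : ℝ)) (s := Metric.ball 0 1)
      (bound := fun x => (∑ j, ‖v j‖) ^ (k + 1) * g x) (Metric.ball_mem_nhds 0 one_pos)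
      (Filter.Eventually.of_forall fun lam => (sb_cont c v k lam).aestronglyMeasurable)
      (sb_integrable c v k 0 (by norm_num))
      ((sb_cont c v (k + 1) 0).aestronglyMeasurable)
      (Filter.Eventually.of_forall fun x lam hlam => by
        have hl : |lam| ≤ 1 := by
          rw [Metric.mem_ball, Real.dist_eq, sub_zero] at hlam
          exact hlam.le
        exact (sb_norm_le c v (k + 1) lam hl x).trans
          (mul_le_mul_of_nonneg_left (hg x) (by positivity)))
      (hg_int.const_mul _)
      (Filter.Eventually.of_forall fun x lam _ => by
        have h1 : HasDerivAt (fun l : ℝ =>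
            (∑ j, (x j : ℂ) * c j) + (l : ℂ) * (∑ j, (x j : ℂ) * v j)
              - (∑ j, (x j : ℂ) ^ 2) / 2) (∑ j, (x j : ℂ) * v j) lam := by
          have h0 : HasDerivAt (fun l : ℝ => ((l : ℂ))) 1 lam := Complex.ofRealCLM.hasDerivAt
          have := ((h0.mul_const (∑ j, (x j : ℂ) * v j)).const_add
            (∑ j, (x j : ℂ) * c j)).sub_const ((∑ j, (x j : ℂ) ^ 2) / 2)
          simpa using this
        have h2 := (h1.cexp).mul_const ((∑ j, (x j : ℂ) * v j) ^ k)
        refine h2.congr_deriv ?_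
        simp only [hF']
        ring)
    obtain ⟨-, hD⟩ := hdom
    -- identify the integral function using the induction hypothesis
    have hGeq : (fun lam : ℝ => ∫ x, F lam x)
        = fun lam : ℝ => K * Complex.exp (C2 / 2 + (lam : ℂ) * W) * W ^ k := by
      funext lam
      have hIH := ih (fun j => c j + (lam : ℂ) * v j)
      have e0 : (fun x : Fin m → ℝ =>
          Complex.exp ((∑ j, (x j : ℂ) * (c j + (lam : ℂ) * v j))
            - (∑ j, (x j : ℂ) ^ 2) / 2) * (∑ j, (x j : ℂ) * v j) ^ k) = F lam := by
        funext x
        simp only [hF]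
        congr 2
        rw [Finset.mul_sum, ← Finset.sum_add_distrib]
        congr 1
        exact Finset.sum_congr rfl fun j _ => by ring
      have e1 : ∑ j, (c j + (lam : ℂ) * v j) ^ 2 = C2 + 2 * (lam : ℂ) * W := by
        rw [Finset.sum_congr rfl fun j _ => show (c j + (lam : ℂ) * v j) ^ 2
          = c j ^ 2 + (2 * (lam : ℂ)) * (c j * v j) + (lam : ℂ) ^ 2 * v j ^ 2 by ring]
        rw [Finset.sum_add_distrib, Finset.sum_add_distrib, ← Finset.mul_sum, ← Finset.mul_sum,
          hv, mul_zero, add_zero, hW, hC2]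
      have e2 : ∑ j, (c j + (lam : ℂ) * v j) * v j = W := by
        rw [Finset.sum_congr rfl fun j _ => show (c j + (lam : ℂ) * v j) * v j
          = c j * v j + (lam : ℂ) * v j ^ 2 by ring]
        rw [Finset.sum_add_distrib, ← Finset.mul_sum, hv, mul_zero, add_zero, hW]
      rw [e0, e1, e2] at hIH
      rw [hIH]
      congr 2
      ring
    -- derivative of the right-hand side
    have hD2 : HasDerivAt (fun lam : ℝ => K * Complex.exp (C2 / 2 + (lam : ℂ) * W) * W ^ k)
        (K * Complex.exp (C2 / 2) * W ^ (k + 1)) 0 := by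
      have h0 : HasDerivAt (fun l : ℝ => ((l : ℂ))) 1 (0 : ℝ) := Complex.ofRealCLM.hasDerivAt
      have h1 : HasDerivAt (fun l : ℝ => C2 / 2 + (l : ℂ) * W) W (0 : ℝ) := by
        simpa using (h0.mul_const W).const_add (C2 / 2)
      have h2 := ((h1.cexp).const_mul K).mul_const (W ^ k)
      refine h2.congr_deriv ?_
      simp only [Complex.ofReal_zero, zero_mul, add_zero]
      ring
    rw [hGeq] at hD
    have hkey : (∫ x, F' 0 x) = K * Complex.exp (C2 / 2) * W ^ (k + 1) := hD.unique hD2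
    rw [← hkey]
    congr 1
    funext x
    simp only [hF', Complex.ofReal_zero, zero_mul, add_zero]
/-- Complex-scalar plane-wave form of Theorem 3.5 with `s = 0`: for orthonormal `t, s ∈ ℝ^m`,
the Segal–Bargmann transform of `(⟨x,t⟩ - i⟨x,s⟩)^k e^{-|x|²/4}` is `(⟨z,t⟩ - i⟨z,s⟩)^k`. -/
theorem segalBargmann_planeWave (m : ℕ) (hm : 2 ≤ m) (t s : Fin m → ℝ)
    (ht : ∑ j, t j ^ 2 = 1) (hs : ∑ j, s j ^ 2 = 1) (hts : ∑ j, t j * s j = 0) (k : ℕ)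
    (z : Fin m → ℂ) :
    ((Real.sqrt (2 * Real.pi) ^ m : ℝ) : ℂ)⁻¹ *
      ∫ x : Fin m → ℝ,
        Complex.exp (-(∑ j, z j ^ 2) / 2 + (∑ j, (x j : ℂ) * z j) - (∑ j, (x j : ℂ) ^ 2) / 4)
          * ((∑ j, (x j : ℂ) * (t j : ℂ)) - Complex.I * ∑ j, (x j : ℂ) * (s j : ℂ)) ^ k
          * (Real.exp (-(∑ j, x j ^ 2) / 4) : ℂ)
    = ((∑ j, z j * (t j : ℂ)) - Complex.I * ∑ j, z j * (s j : ℂ)) ^ k := by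
  set v : Fin m → ℂ := fun j => (t j : ℂ) - Complex.I * (s j : ℂ) with hvdef
  have hv : ∑ j, v j ^ 2 = 0 := by
    have h1 : ∀ j : Fin m, v j ^ 2 = ((t j ^ 2 : ℝ) : ℂ)
        - (2 * Complex.I) * ((t j * s j : ℝ) : ℂ) - ((s j ^ 2 : ℝ) : ℂ) := by
      intro j
      simp only [hvdef]
      push_cast
      linear_combination (s j : ℂ) ^ 2 * Complex.I_sq
    rw [Finset.sum_congr rfl fun j _ => h1 j]
    rw [Finset.sum_sub_distrib, Finset.sum_sub_distrib, ← Finset.mul_sum]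
    rw [← Complex.ofReal_sum, ← Complex.ofReal_sum, ← Complex.ofReal_sum]
    rw [ht, hs, hts]
    simp
  have hw : ∀ x : Fin m → ℝ,
      ((∑ j, (x j : ℂ) * (t j : ℂ)) - Complex.I * ∑ j, (x j : ℂ) * (s j : ℂ))
      = ∑ j, (x j : ℂ) * v j := by
    intro x
    rw [Finset.mul_sum, ← Finset.sum_sub_distrib]
    exact Finset.sum_congr rfl fun j _ => by simp only [hvdef]; ring
  have hwz : ((∑ j, z j * (t j : ℂ)) - Complex.I * ∑ j, z j * (s j : ℂ)) = ∑ j, z j * v j := by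
    rw [Finset.mul_sum, ← Finset.sum_sub_distrib]
    exact Finset.sum_congr rfl fun j _ => by simp only [hvdef]; ring
  have hint : ∀ x : Fin m → ℝ,
      Complex.exp (-(∑ j, z j ^ 2) / 2 + (∑ j, (x j : ℂ) * z j) - (∑ j, (x j : ℂ) ^ 2) / 4)
          * ((∑ j, (x j : ℂ) * (t j : ℂ)) - Complex.I * ∑ j, (x j : ℂ) * (s j : ℂ)) ^ k
          * (Real.exp (-(∑ j, x j ^ 2) / 4) : ℂ)
      = Complex.exp (-(∑ j, z j ^ 2) / 2) *
          (Complex.exp ((∑ j, (x j : ℂ) * z j) - (∑ j, (x j : ℂ) ^ 2) / 2)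
            * (∑ j, (x j : ℂ) * v j) ^ k) := by
    intro x
    rw [hw x, Complex.ofReal_exp]
    rw [show ((-(∑ j, x j ^ 2) / 4 : ℝ) : ℂ) = -(∑ j, (x j : ℂ) ^ 2) / 4 by push_cast; ring]
    rw [mul_right_comm, ← Complex.exp_add]
    rw [show (-(∑ j, z j ^ 2) / 2 + (∑ j, (x j : ℂ) * z j) - (∑ j, (x j : ℂ) ^ 2) / 4
        + -(∑ j, (x j : ℂ) ^ 2) / 4)
      = (-(∑ j, z j ^ 2) / 2) + ((∑ j, (x j : ℂ) * z j) - (∑ j, (x j : ℂ) ^ 2) / 2) by ring]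
    rw [Complex.exp_add, mul_assoc]
  rw [integral_congr_ae (Filter.Eventually.of_forall hint)]
  rw [MeasureTheory.integral_const_mul, sb_main m v hv k z, hwz]
  have hne : ((Real.sqrt (2 * Real.pi) : ℝ) : ℂ) ^ m ≠ 0 :=
    pow_ne_zero _ (Complex.ofReal_ne_zero.2 (by positivity))
  have hee : Complex.exp (-(∑ j, z j ^ 2) / 2) * Complex.exp ((∑ j, z j ^ 2) / 2) = 1 := by
    rw [← Complex.exp_add]
    simp [neg_div]
  rw [Complex.ofReal_pow]
  calc (((Real.sqrt (2 * Real.pi) : ℝ) : ℂ) ^ m)⁻¹ *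
        (Complex.exp (-(∑ j, z j ^ 2) / 2) *
          (((Real.sqrt (2 * Real.pi) : ℝ) : ℂ) ^ m * Complex.exp ((∑ j, z j ^ 2) / 2)
            * (∑ j, z j * v j) ^ k))
      = ((((Real.sqrt (2 * Real.pi) : ℝ) : ℂ) ^ m)⁻¹ * (((Real.sqrt (2 * Real.pi) : ℝ) : ℂ) ^ m))
          * (Complex.exp (-(∑ j, z j ^ 2) / 2) * Complex.exp ((∑ j, z j ^ 2) / 2))
          * (∑ j, z j * v j) ^ k := by ring
    _ = (∑ j, z j * v j) ^ k := by rw [inv_mul_cancel₀ hne, hee, one_mul, one_mul]
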